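/- Let m : ℝ → ℝ be a continuous function, let σ be a natural number, and let z = (p,q,v,w) : ℝ × ℝ → ℝ⁴ be a C¹ function satisfying, at every point (t,x), the Hamiltonian PDE M ∂ₜz(t,x) + m(t) K ∂ₓz(t,x) = ∇S₁(z(t,x)) + m(t) ∇S₂(z(t,x)). Suppose ξ, η : ℝ × ℝ → ℝ⁴ are C¹ solutions of the associated variational (linearized) equation M ∂ₜζ + m(t) K ∂ₓζ = Hess S₁(z(t,x)) ζ + m(t) Hess S₂(z(t,x)) ζ. Then for every (t,x), ∂ₜ⟨ξ(t,x), M η(t,x)⟩ + m(t) ∂ₓ⟨ξ(t,x), K η(t,x)⟩ = 0 (the multi-symplectic conservation law for the nonlinear Schrödinger equation with time-dependent dispersion, the deterministic pathwise form of the stochastic multi-symplectic conservation law). -/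

import Mathlib

open scoped BigOperators Matrix

noncomputable section

/-- Euclidean inner product on `ℝ⁴`. -/
def dot4 (x y : Fin 4 → ℝ) : ℝ := ∑ i, x i * y i

/-- The matrix `M` of the multi-symplectic formulation. -/
def Mmat : Matrix (Fin 4) (Fin 4) ℝ :=
  !![0, -1, 0, 0; 1, 0, 0, 0; 0, 0, 0, 0; 0, 0, 0, 0]

/-- The matrix `K` of the multi-symplectic formulation. -/
def Kmat : Matrix (Fin 4) (Fin 4) ℝ :=
  !![0, 0, 1, 0; 0, 0, 0, 1; -1, 0, 0, 0; 0, -1, 0, 0]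

/-- `S₁(p,q,v,w) = −(p²+q²)^{σ+1}/(2σ+2)`. -/
def S1 (σ : ℕ) (z : Fin 4 → ℝ) : ℝ :=
  -(z 0 ^ 2 + z 1 ^ 2) ^ (σ + 1) / (2 * (σ : ℝ) + 2)

/-- `S₂(p,q,v,w) = −(v²+w²)/2`. -/
def S2 (z : Fin 4 → ℝ) : ℝ := -(z 2 ^ 2 + z 3 ^ 2) / 2

/-- The gradient of `f : ℝ⁴ → ℝ`: the vector of partial derivatives. -/
def grad4 (f : (Fin 4 → ℝ) → ℝ) (z : Fin 4 → ℝ) : Fin 4 → ℝ :=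
  fun i => fderiv ℝ f z (Pi.single i 1)

/-- The Hessian of `f : ℝ⁴ → ℝ` at `z` applied to a vector `ζ`: the derivative of the
gradient at `z` in the direction `ζ`. -/
def hess4 (f : (Fin 4 → ℝ) → ℝ) (z ζ : Fin 4 → ℝ) : Fin 4 → ℝ :=
  fderiv ℝ (grad4 f) z ζ

/-- Partial derivative in the first (time) variable. -/
def pt (z : ℝ × ℝ → Fin 4 → ℝ) (t x : ℝ) : Fin 4 → ℝ := deriv (fun s => z (s, x)) t

/-- Partial derivative in the second (space) variable. -/
def px (z : ℝ × ℝ → Fin 4 → ℝ) (t x : ℝ) : Fin 4 → ℝ := deriv (fun y => z (t, y)) x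


lemma contDiff_S1 (σ : ℕ) : ContDiff ℝ 2 (S1 σ) := by
  have h0 : ContDiff ℝ 2 (fun z : Fin 4 → ℝ => z 0) :=
    (ContinuousLinearMap.proj 0 : (Fin 4 → ℝ) →L[ℝ] ℝ).contDiff
  have h1 : ContDiff ℝ 2 (fun z : Fin 4 → ℝ => z 1) :=
    (ContinuousLinearMap.proj 1 : (Fin 4 → ℝ) →L[ℝ] ℝ).contDiff
  exact ((((h0.pow 2).add (h1.pow 2)).pow (σ + 1)).neg).div_const _

lemma contDiff_S2 : ContDiff ℝ 2 S2 := by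
  have h2 : ContDiff ℝ 2 (fun z : Fin 4 → ℝ => z 2) :=
    (ContinuousLinearMap.proj 2 : (Fin 4 → ℝ) →L[ℝ] ℝ).contDiff
  have h3 : ContDiff ℝ 2 (fun z : Fin 4 → ℝ => z 3) :=
    (ContinuousLinearMap.proj 3 : (Fin 4 → ℝ) →L[ℝ] ℝ).contDiff
  exact (((h2.pow 2).add (h3.pow 2)).neg).div_const _

lemma sum_single_apply (g : (Fin 4 → ℝ) →L[ℝ] ℝ) (a : Fin 4 → ℝ) :
    ∑ i, a i * g (Pi.single i 1) = g a := by
  conv_rhs => rw [pi_eq_sum_univ a]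
  rw [map_sum]
  refine Finset.sum_congr rfl fun i _ => ?_
  rw [map_smul]
  congr 1
  congr 1
  funext j
  simp [Pi.single_apply, eq_comm]

lemma hess4_eq (f : (Fin 4 → ℝ) → ℝ) (hf : ContDiff ℝ 2 f) (z ζ : Fin 4 → ℝ) :
    hess4 f z ζ = fun i => (fderiv ℝ (fderiv ℝ f) z ζ) (Pi.single i 1) := by
  have hd1 : ContDiff ℝ 1 (fderiv ℝ f) := hf.fderiv_right (by norm_num)
  have hD : HasFDerivAt (fderiv ℝ f) (fderiv ℝ (fderiv ℝ f) z) z :=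
    ((hd1.differentiable one_ne_zero) z).hasFDerivAt
  set D := fderiv ℝ (fderiv ℝ f) z
  have hL : HasFDerivAt (grad4 f)
      (ContinuousLinearMap.pi fun i =>
        (ContinuousLinearMap.apply ℝ ℝ (Pi.single i 1)).comp D) z := by
    rw [hasFDerivAt_pi']
    intro i
    have : (fun w => grad4 f w i) =
        (ContinuousLinearMap.apply ℝ ℝ (Pi.single i 1 : Fin 4 → ℝ)) ∘ (fderiv ℝ f) := rfl
    exact ((ContinuousLinearMap.apply ℝ ℝ (Pi.single i 1)).hasFDerivAt.comp z hD)
  have : fderiv ℝ (grad4 f) z =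
      ContinuousLinearMap.pi fun i =>
        (ContinuousLinearMap.apply ℝ ℝ (Pi.single i 1)).comp D := hL.fderiv
  funext i
  simp [hess4, this]

lemma hess4_symm (f : (Fin 4 → ℝ) → ℝ) (hf : ContDiff ℝ 2 f) (z a b : Fin 4 → ℝ) :
    dot4 a (hess4 f z b) = dot4 b (hess4 f z a) := by
  rw [hess4_eq f hf, hess4_eq f hf]
  set D := fderiv ℝ (fderiv ℝ f) z with hDdef
  have hsymm : ∀ v w, D v w = D w v :=
    second_derivative_symmetric
      (fun y => ((hf.differentiable (by norm_num)) y).hasFDerivAt)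
      (((hf.fderiv_right (le_refl 2) : ContDiff ℝ 1 (fderiv ℝ f)).differentiable one_ne_zero
          z).hasFDerivAt)
  calc dot4 a (fun i => D b (Pi.single i 1))
      = (D b) a := sum_single_apply (D b) a
    _ = (D a) b := hsymm b a
    _ = dot4 b (fun i => D a (Pi.single i 1)) := (sum_single_apply (D a) b).symm



lemma dot4_add_right (a b c : Fin 4 → ℝ) : dot4 a (b + c) = dot4 a b + dot4 a c := by
  simp [dot4, mul_add, Finset.sum_add_distrib]

lemma dot4_smul_right (r : ℝ) (a b : Fin 4 → ℝ) : dot4 a (r • b) = r * dot4 a b := by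
  simp [dot4, Finset.mul_sum, mul_left_comm]

lemma dot4_M_antisymm (a b : Fin 4 → ℝ) :
    dot4 a (Mmat.mulVec b) = -dot4 b (Mmat.mulVec a) := by
  simp [dot4, Mmat, Matrix.mulVec, dotProduct, Fin.sum_univ_four, Matrix.vecHead, Matrix.vecTail]
  ring

lemma dot4_K_antisymm (a b : Fin 4 → ℝ) :
    dot4 a (Kmat.mulVec b) = -dot4 b (Kmat.mulVec a) := by
  simp [dot4, Kmat, Matrix.mulVec, dotProduct, Fin.sum_univ_four, Matrix.vecHead, Matrix.vecTail]
  ring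

lemma hasDerivAt_dot4_mulVec (A : Matrix (Fin 4) (Fin 4) ℝ)
    (f g : ℝ → Fin 4 → ℝ) (f' g' : Fin 4 → ℝ) (t : ℝ)
    (hf : ∀ i, HasDerivAt (fun s => f s i) (f' i) t)
    (hg : ∀ i, HasDerivAt (fun s => g s i) (g' i) t) :
    HasDerivAt (fun s => dot4 (f s) (A.mulVec (g s)))
      (dot4 f' (A.mulVec (g t)) + dot4 (f t) (A.mulVec g')) t := by
  have key : (fun s => dot4 (f s) (A.mulVec (g s)))
      = fun s => ∑ i, ∑ j, f s i * (A i j * g s j) := by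
    funext s
    simp [dot4, Matrix.mulVec, dotProduct, Finset.mul_sum]
  have e : dot4 f' (A.mulVec (g t)) + dot4 (f t) (A.mulVec g')
      = ∑ i, ∑ j, (f' i * (A i j * g t j) + f t i * (A i j * g' j)) := by
    simp [dot4, Matrix.mulVec, dotProduct, Finset.mul_sum,
      Finset.sum_add_distrib]
  rw [key, e]
  apply HasDerivAt.fun_sum
  intro i _
  apply HasDerivAt.fun_sum
  intro j _
  exact (hf i).mul ((hg j).const_mul (A i j))

lemma hasDerivAt_pt (f : ℝ × ℝ → Fin 4 → ℝ) (hf : ContDiff ℝ 1 f) (t x : ℝ) (i : Fin 4) :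
    HasDerivAt (fun s => f (s, x) i) (pt f t x i) t := by
  have hg : DifferentiableAt ℝ (fun s : ℝ => f (s, x)) t :=
    ((hf.differentiable one_ne_zero).comp
      ((differentiable_id.prodMk (differentiable_const x)) : Differentiable ℝ fun s : ℝ => (s, x))) t
  have h1 : HasDerivAt (fun s : ℝ => f (s, x)) (pt f t x) t := hg.hasDerivAt
  exact (ContinuousLinearMap.proj i : (Fin 4 → ℝ) →L[ℝ] ℝ).hasFDerivAt.comp_hasDerivAt t h1

lemma hasDerivAt_px (f : ℝ × ℝ → Fin 4 → ℝ) (hf : ContDiff ℝ 1 f) (t x : ℝ) (i : Fin 4) :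
    HasDerivAt (fun y => f (t, y) i) (px f t x i) x := by
  have hg : DifferentiableAt ℝ (fun y : ℝ => f (t, y)) x :=
    ((hf.differentiable one_ne_zero).comp
      (((differentiable_const t).prodMk differentiable_id) : Differentiable ℝ fun y : ℝ => (t, y))) x
  have h1 : HasDerivAt (fun y : ℝ => f (t, y)) (px f t x) x := hg.hasDerivAt
  exact (ContinuousLinearMap.proj i : (Fin 4 → ℝ) →L[ℝ] ℝ).hasFDerivAt.comp_hasDerivAt x h1


/-- the multi-symplectic conservation law for the nonlinear Schrödinger
equation with time-dependent dispersion: if `z` solves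
`M ∂ₜz + m(t) K ∂ₓz = ∇S₁(z) + m(t) ∇S₂(z)` and `ξ, η` solve the associated variational
equation, then `∂ₜ⟨ξ, Mη⟩ + m(t) ∂ₓ⟨ξ, Kη⟩ = 0` everywhere. -/
theorem stmt_0 (m : ℝ → ℝ) (hm : Continuous m) (σ : ℕ)
    (z ξ η : ℝ × ℝ → Fin 4 → ℝ)
    (hz : ContDiff ℝ 1 z) (hξ : ContDiff ℝ 1 ξ) (hη : ContDiff ℝ 1 η)
    (hzeq : ∀ t x : ℝ,
      Mmat.mulVec (pt z t x) + m t • Kmat.mulVec (px z t x)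
        = grad4 (S1 σ) (z (t, x)) + m t • grad4 S2 (z (t, x)))
    (hξeq : ∀ t x : ℝ,
      Mmat.mulVec (pt ξ t x) + m t • Kmat.mulVec (px ξ t x)
        = hess4 (S1 σ) (z (t, x)) (ξ (t, x)) + m t • hess4 S2 (z (t, x)) (ξ (t, x)))
    (hηeq : ∀ t x : ℝ,
      Mmat.mulVec (pt η t x) + m t • Kmat.mulVec (px η t x)
        = hess4 (S1 σ) (z (t, x)) (η (t, x)) + m t • hess4 S2 (z (t, x)) (η (t, x)))
    (t x : ℝ) :
    deriv (fun s => dot4 (ξ (s, x)) (Mmat.mulVec (η (s, x)))) t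
      + m t * deriv (fun y => dot4 (ξ (t, y)) (Kmat.mulVec (η (t, y)))) x = 0 := by
  have hMt : HasDerivAt (fun s => dot4 (ξ (s, x)) (Mmat.mulVec (η (s, x))))
      (dot4 (pt ξ t x) (Mmat.mulVec (η (t, x))) + dot4 (ξ (t, x)) (Mmat.mulVec (pt η t x))) t :=
    hasDerivAt_dot4_mulVec Mmat (fun s => ξ (s, x)) (fun s => η (s, x)) _ _ t
      (fun i => hasDerivAt_pt ξ hξ t x i) (fun i => hasDerivAt_pt η hη t x i)
  have hKx : HasDerivAt (fun y => dot4 (ξ (t, y)) (Kmat.mulVec (η (t, y))))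
      (dot4 (px ξ t x) (Kmat.mulVec (η (t, x))) + dot4 (ξ (t, x)) (Kmat.mulVec (px η t x))) x :=
    hasDerivAt_dot4_mulVec Kmat (fun y => ξ (t, y)) (fun y => η (t, y)) _ _ x
      (fun i => hasDerivAt_px ξ hξ t x i) (fun i => hasDerivAt_px η hη t x i)
  rw [hMt.deriv, hKx.deriv]
  have eξ : dot4 (η (t, x)) (Mmat.mulVec (pt ξ t x))
        + m t * dot4 (η (t, x)) (Kmat.mulVec (px ξ t x))
      = dot4 (η (t, x)) (hess4 (S1 σ) (z (t, x)) (ξ (t, x)))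
        + m t * dot4 (η (t, x)) (hess4 S2 (z (t, x)) (ξ (t, x))) := by
    simp only [← dot4_smul_right, ← dot4_add_right]
    rw [hξeq t x]
  have eη : dot4 (ξ (t, x)) (Mmat.mulVec (pt η t x))
        + m t * dot4 (ξ (t, x)) (Kmat.mulVec (px η t x))
      = dot4 (ξ (t, x)) (hess4 (S1 σ) (z (t, x)) (η (t, x)))
        + m t * dot4 (ξ (t, x)) (hess4 S2 (z (t, x)) (η (t, x))) := by
    simp only [← dot4_smul_right, ← dot4_add_right]
    rw [hηeq t x]
  have a1 := dot4_M_antisymm (pt ξ t x) (η (t, x))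
  have a2 := dot4_K_antisymm (px ξ t x) (η (t, x))
  have s1 := hess4_symm (S1 σ) (contDiff_S1 σ) (z (t, x)) (ξ (t, x)) (η (t, x))
  have s2 := hess4_symm S2 contDiff_S2 (z (t, x)) (ξ (t, x)) (η (t, x))
  linear_combination a1 + m t * a2 - eξ + eη + s1 + m t * s2


end
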